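/- arXiv:2406.05532 — 2 statements merged into one kernel-verified Lean document; each statement's English description precedes it below -/
import Mathlib

section
/- Lower bound of Theorem 1: consider the SSM output map y_k = Σ_{j=1}^{k} K_j u_{k-j+1} where K_j = C̄_j (∏_{i=1}^{j-1} Ā_i) B̄_j are scalars (kernel coefficients), written as y = H u for the lower triangular Toeplitz matrix H with first column (K₁,…,K_L). Let ε = u' − u be a random perturbation with E[εᵢ] = μ for all i. Then there exists a constant c₁ > 0 (the smallest eigenvalue of EᵀE, E the all-ones lower triangular matrix) such that E[‖y' − y‖²] ≥ μ² c₁ Σ_{j=1}^{L} K_j². -/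
open Matrix MeasureTheory

/-- The L×L all-ones lower triangular matrix. -/
def Emat (L : ℕ) : Matrix (Fin L) (Fin L) ℝ :=
  Matrix.of fun i j => if j ≤ i then (1 : ℝ) else 0

/-- The lower triangular Toeplitz matrix with first column `K`. -/
def toeplitzLT {L : ℕ} (K : Fin L → ℝ) : Matrix (Fin L) (Fin L) ℝ :=
  Matrix.of fun i j =>
    if h : (j : ℕ) ≤ (i : ℕ) then K ⟨(i : ℕ) - (j : ℕ), by omega⟩ else 0

lemma quad_lower {n : Type*} [Fintype n] [DecidableEq n] {M : Matrix n n ℝ}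
    (hM : M.IsHermitian) {c : ℝ} (hc : ∀ i, c ≤ hM.eigenvalues i) (x : n → ℝ) :
    c * (x ⬝ᵥ x) ≤ x ⬝ᵥ M *ᵥ x := by
  set U : Matrix n n ℝ := (hM.eigenvectorUnitary : Matrix n n ℝ) with hUdef
  have hmem := hM.eigenvectorUnitary.prop
  rw [Unitary.mem_iff] at hmem
  have hsU : star U = Uᵀ := by
    ext i j; simp [Matrix.star_apply]
  set w : n → ℝ := star U *ᵥ x with hw
  have hxw : U *ᵥ w = x := by
    rw [hw, Matrix.mulVec_mulVec, hmem.2, Matrix.one_mulVec]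
  have hx2 : x ⬝ᵥ x = w ⬝ᵥ w := by
    conv_lhs => rw [← hxw]
    rw [Matrix.dotProduct_mulVec,
        show U *ᵥ w = w ᵥ* Uᵀ from (Matrix.vecMul_transpose U w).symm,
        Matrix.vecMul_vecMul, ← hsU, hmem.1, Matrix.vecMul_one]
  have hquad : x ⬝ᵥ M *ᵥ x =
      ∑ i, w i * (hM.eigenvalues i * w i) := by
    conv_lhs => rw [hM.spectral_theorem, Unitary.conjStarAlgAut_apply, ← hUdef]
    rw [← Matrix.mulVec_mulVec, ← Matrix.mulVec_mulVec, Matrix.dotProduct_mulVec]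
    rw [show x ᵥ* U = Uᵀ *ᵥ x from (Matrix.mulVec_transpose U x).symm, ← hsU, ← hw]
    simp [dotProduct, Matrix.mulVec_diagonal]
  rw [hquad, hx2, dotProduct, Finset.mul_sum]
  refine Finset.sum_le_sum fun i _ => ?_
  have h1 := hc i
  nlinarith [sq_nonneg (w i)]

lemma toeplitz_row_sum {L : ℕ} (K : Fin L → ℝ) (i : Fin L) :
    ∑ j, toeplitzLT K i j = ∑ j, Emat L i j * K j := by
  have hiL : (i : ℕ) < L := i.isLt
  set f : ℕ → ℝ := fun k => if h : k ≤ (i : ℕ) then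
      K ⟨k, lt_of_le_of_lt h hiL⟩ else 0 with hf
  set g : ℕ → ℝ := fun k => if h : k ≤ (i : ℕ) then
      K ⟨(i : ℕ) - k, lt_of_le_of_lt (Nat.sub_le _ _) hiL⟩ else 0 with hg
  have h1 : ∑ j, toeplitzLT K i j = ∑ k ∈ Finset.range L, g k := by
    rw [← Fin.sum_univ_eq_sum_range]
    refine Finset.sum_congr rfl fun j _ => ?_
    simp only [toeplitzLT, Matrix.of_apply, hg]
  have h2 : ∑ j, Emat L i j * K j = ∑ k ∈ Finset.range L, f k := by
    rw [← Fin.sum_univ_eq_sum_range]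
    refine Finset.sum_congr rfl fun j _ => ?_
    simp only [Emat, Matrix.of_apply, hf, Fin.le_def]
    split <;> simp
  have hsub : Finset.range (i + 1) ⊆ Finset.range L := by
    intro k hk; simp only [Finset.mem_range] at *; omega
  have h3 : ∑ k ∈ Finset.range L, g k = ∑ k ∈ Finset.range ((i : ℕ) + 1), g k :=
    (Finset.sum_subset hsub (fun k _ hk => by
      simp only [Finset.mem_range, not_lt] at hk
      exact dif_neg (by omega))).symm
  have h4 : ∑ k ∈ Finset.range L, f k = ∑ k ∈ Finset.range ((i : ℕ) + 1), f k :=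
    (Finset.sum_subset hsub (fun k _ hk => by
      simp only [Finset.mem_range, not_lt] at hk
      exact dif_neg (by omega))).symm
  have h5 : ∑ k ∈ Finset.range ((i : ℕ) + 1), g k
      = ∑ k ∈ Finset.range ((i : ℕ) + 1), f k := by
    rw [← Finset.sum_range_reflect f ((i : ℕ) + 1)]
    refine Finset.sum_congr rfl fun k hk => ?_
    simp only [Finset.mem_range] at hk
    have hki : k ≤ (i : ℕ) := by omega
    rw [hg, hf]
    simp only []
    rw [dif_pos hki, dif_pos (by omega : (i : ℕ) + 1 - 1 - k ≤ (i : ℕ))]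
    congr 1
  rw [h1, h2, h3, h4, h5]

lemma Emat_isUnit (L : ℕ) : IsUnit (Emat L) := by
  rw [Matrix.isUnit_iff_isUnit_det]
  have hdet : (Emat L).det = 1 := by
    rw [Matrix.det_of_lowerTriangular (Emat L)
      (by intro i j hij
          have : i < j := by simpa using hij
          simp [Emat, not_le_of_gt this])]
    simp [Emat]
  rw [hdet]; exact isUnit_one

lemma Emat_key {L : ℕ} (v : Fin L → ℝ) :
    v ⬝ᵥ ((Emat L)ᵀ * Emat L) *ᵥ v = (Emat L *ᵥ v) ⬝ᵥ (Emat L *ᵥ v) := by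
  rw [← Matrix.mulVec_mulVec, Matrix.dotProduct_mulVec, Matrix.vecMul_transpose]

lemma Emat_posDef (L : ℕ) : ((Emat L)ᵀ * Emat L).PosDef := by
  refine Matrix.PosDef.of_dotProduct_mulVec_pos (Matrix.isHermitian_conjTranspose_mul_self _) fun x hx => ?_
  have hEx : Emat L *ᵥ x ≠ 0 := by
    intro hcon
    exact hx ((Matrix.mulVec_injective_iff_isUnit.mpr (Emat_isUnit L))
      (by rw [hcon, Matrix.mulVec_zero]))
  obtain ⟨i, hi⟩ := Function.ne_iff.mp hEx
  have : star x = x := by simp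
  rw [this, Emat_key, dotProduct]
  refine Finset.sum_pos' (fun j _ => mul_self_nonneg _) ⟨i, Finset.mem_univ i, ?_⟩
  exact mul_self_pos.mpr (by simpa using hi)

/-- Lower bound of Theorem 1: for the SSM output map `y = Hu` with kernel coefficients
`K_j = C̄_j (∏_{i<j-1} Ā_i) B̄_j` and a random perturbation `ε` with mean `μ` in every
component, the smallest eigenvalue `c₁` of `EᵀE` is positive and
`E[‖y' − y‖²] ≥ μ² c₁ Σ_j K_j²`. -/
theorem ssm_output_error_lower_bound
    {h L : ℕ} {Ω : Type*} [MeasureSpace Ω] [IsProbabilityMeasure (volume : Measure Ω)]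
    (A : ℕ → Matrix (Fin h) (Fin h) ℝ) (B : ℕ → (Fin h → ℝ)) (C : ℕ → (Fin h → ℝ))
    (K : Fin L → ℝ)
    (hK : ∀ j : Fin L, K j = C (j : ℕ) ⬝ᵥ (((List.range (j : ℕ)).map A).prod).mulVec (B (j : ℕ)))
    (ε : Ω → Fin L → ℝ) (μ : ℝ) (hmean : ∀ i, ∫ ω, ε ω i = μ)
    (hherm : ((Emat L)ᵀ * Emat L).IsHermitian) (c₁ : ℝ)
    (hc₁ : IsLeast (Set.range hherm.eigenvalues) c₁)
    (hint : ∀ i, Integrable (fun ω => (toeplitzLT K).mulVec (ε ω) i))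
    (hint2 : Integrable (fun ω => ∑ i, ((toeplitzLT K).mulVec (ε ω) i) ^ 2)) :
    0 < c₁ ∧
      μ ^ 2 * c₁ * ∑ j, (K j) ^ 2 ≤ ∫ ω, ∑ i, ((toeplitzLT K).mulVec (ε ω) i) ^ 2 := by
  classical
  have hpos : 0 < c₁ := by
    obtain ⟨i, hi⟩ := hc₁.1
    exact hi ▸ (Emat_posDef L).eigenvalues_pos i
  refine ⟨hpos, ?_⟩
  have hnonneg : 0 ≤ ∫ ω, ∑ i, ((toeplitzLT K).mulVec (ε ω) i) ^ 2 :=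
    integral_nonneg fun ω => Finset.sum_nonneg fun i _ => sq_nonneg _
  by_cases hμ : μ = 0
  · simpa [hμ] using hnonneg
  -- each coordinate of ε is integrable
  have hεint : ∀ i, Integrable (fun ω => ε ω i) := by
    intro i
    by_contra hni
    exact hμ ((hmean i).symm.trans (integral_undef hni))
  -- integrability of squares
  have hXsq : ∀ i, Integrable (fun ω => ((toeplitzLT K).mulVec (ε ω) i) ^ 2) := by
    intro i
    refine hint2.mono' ?_ (Filter.Eventually.of_forall fun ω => ?_)
    · have : (fun ω => ((toeplitzLT K).mulVec (ε ω) i) ^ 2)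
          = fun ω => ((toeplitzLT K).mulVec (ε ω) i) * ((toeplitzLT K).mulVec (ε ω) i) := by
        funext ω; ring
      rw [this]
      exact (hint i).aestronglyMeasurable.mul (hint i).aestronglyMeasurable
    · rw [Real.norm_eq_abs, abs_of_nonneg (sq_nonneg _)]
      exact Finset.single_le_sum (fun j _ => sq_nonneg ((toeplitzLT K).mulVec (ε ω) j))
        (Finset.mem_univ i)
  -- the mean of each output coordinate
  have hmi : ∀ i, ∫ ω, (toeplitzLT K).mulVec (ε ω) i = μ * (Emat L *ᵥ K) i := by
    intro i
    have heq : ∀ ω, (toeplitzLT K).mulVec (ε ω) i = ∑ j, toeplitzLT K i j * ε ω j :=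
      fun ω => rfl
    calc ∫ ω, (toeplitzLT K).mulVec (ε ω) i
        = ∫ ω, ∑ j, toeplitzLT K i j * ε ω j := by simp_rw [heq]
      _ = ∑ j, ∫ ω, toeplitzLT K i j * ε ω j :=
          integral_finset_sum _ (fun j _ => (hεint j).const_mul _)
      _ = ∑ j, toeplitzLT K i j * μ := by
          refine Finset.sum_congr rfl fun j _ => ?_
          rw [MeasureTheory.integral_const_mul, hmean j]
      _ = (∑ j, toeplitzLT K i j) * μ := by rw [Finset.sum_mul]
      _ = (∑ j, Emat L i j * K j) * μ := by rw [toeplitz_row_sum]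
      _ = μ * (Emat L *ᵥ K) i := by rw [Matrix.mulVec, dotProduct]; ring
  -- Jensen: (E X)^2 ≤ E X^2
  have hjensen : ∀ i, (∫ ω, (toeplitzLT K).mulVec (ε ω) i) ^ 2
      ≤ ∫ ω, ((toeplitzLT K).mulVec (ε ω) i) ^ 2 := by
    intro i
    set m := ∫ ω, (toeplitzLT K).mulVec (ε ω) i with hm
    have h0 : 0 ≤ ∫ ω, ((toeplitzLT K).mulVec (ε ω) i - m) ^ 2 :=
      integral_nonneg fun ω => sq_nonneg _
    have hexp : ∫ ω, ((toeplitzLT K).mulVec (ε ω) i - m) ^ 2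
        = (∫ ω, ((toeplitzLT K).mulVec (ε ω) i) ^ 2) - m ^ 2 := by
      have heq : (fun ω => ((toeplitzLT K).mulVec (ε ω) i - m) ^ 2)
          = fun ω => (((toeplitzLT K).mulVec (ε ω) i) ^ 2
              - (2 * m) * ((toeplitzLT K).mulVec (ε ω) i)) + m ^ 2 := by
        funext ω; ring
      have hsubint : Integrable (fun ω => ((toeplitzLT K).mulVec (ε ω) i) ^ 2
          - (2 * m) * ((toeplitzLT K).mulVec (ε ω) i)) :=
        (hXsq i).sub ((hint i).const_mul (2 * m))
      rw [heq, integral_add hsubint (integrable_const _),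
          integral_sub (hXsq i) ((hint i).const_mul (2 * m)),
          MeasureTheory.integral_const_mul, integral_const]
      simp only [measure_univ, probReal_univ, ENNReal.toReal_one, smul_eq_mul, one_mul, ← hm]
      ring
    linarith [hexp ▸ h0]
  -- the quadratic form bound
  have hquad : c₁ * (K ⬝ᵥ K) ≤ K ⬝ᵥ ((Emat L)ᵀ * Emat L) *ᵥ K :=
    quad_lower hherm (fun i => hc₁.2 ⟨i, rfl⟩) K
  calc μ ^ 2 * c₁ * ∑ j, (K j) ^ 2
      = μ ^ 2 * (c₁ * (K ⬝ᵥ K)) := by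
        rw [dotProduct]; simp_rw [← sq]; ring
    _ ≤ μ ^ 2 * (K ⬝ᵥ ((Emat L)ᵀ * Emat L) *ᵥ K) :=
        mul_le_mul_of_nonneg_left hquad (sq_nonneg μ)
    _ = μ ^ 2 * ((Emat L *ᵥ K) ⬝ᵥ (Emat L *ᵥ K)) := by rw [Emat_key]
    _ = ∑ i, (μ * (Emat L *ᵥ K) i) ^ 2 := by
        rw [dotProduct, Finset.mul_sum]
        refine Finset.sum_congr rfl fun i _ => ?_
        ring
    _ = ∑ i, (∫ ω, (toeplitzLT K).mulVec (ε ω) i) ^ 2 := by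
        refine Finset.sum_congr rfl fun i _ => ?_
        rw [hmi i]
    _ ≤ ∑ i, ∫ ω, ((toeplitzLT K).mulVec (ε ω) i) ^ 2 :=
        Finset.sum_le_sum fun i _ => hjensen i
    _ = ∫ ω, ∑ i, ((toeplitzLT K).mulVec (ε ω) i) ^ 2 :=
        (integral_finset_sum _ (fun i _ => hXsq i)).symm
end

section
/- Upper bound of Theorem 1: with the same SSM setup y = Hu for the lower triangular Toeplitz matrix H with first column (K₁,…,K_L), if the perturbation ε satisfies E[εᵢ²] ≤ M for all i, then E[‖y' − y‖²] ≤ c₂ M Σ_{j=1}^{L} K_j², where c₂ is the largest eigenvalue of EᵀE. -/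
open Matrix MeasureTheory

lemma rayleigh_upper {n : ℕ} {A : Matrix (Fin n) (Fin n) ℝ} (hA : A.IsHermitian)
    {c : ℝ} (hc : ∀ i, hA.eigenvalues i ≤ c) (x : Fin n → ℝ) :
    x ⬝ᵥ A.mulVec x ≤ c * (x ⬝ᵥ x) := by
  set U : Matrix (Fin n) (Fin n) ℝ := (hA.eigenvectorUnitary : Matrix (Fin n) (Fin n) ℝ) with hUdef
  have hUmem : (hA.eigenvectorUnitary : Matrix (Fin n) (Fin n) ℝ) ∈ unitary _ :=
    hA.eigenvectorUnitary.2
  have h1 : U * star U = 1 := Unitary.mul_star_self_of_mem hUmem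
  have hUT : (star U)ᵀ = U := by
    simp [star_eq_conjTranspose, ← conjTranspose_eq_transpose_of_trivial]
  have hUT2 : Uᵀ = star U := by
    simp [star_eq_conjTranspose, conjTranspose_eq_transpose_of_trivial]
  set y : Fin n → ℝ := (star U) *ᵥ x with hy
  have hxy : x ⬝ᵥ x = y ⬝ᵥ y := by
    rw [hy, dotProduct_mulVec, ← mulVec_transpose, hUT, mulVec_mulVec, h1, one_mulVec]
  have hAx : x ⬝ᵥ A.mulVec x = ∑ i, hA.eigenvalues i * (y i)^2 := by
    conv_lhs => rw [hA.spectral_theorem, Unitary.conjStarAlgAut_apply]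
    rw [← mulVec_mulVec, ← mulVec_mulVec, dotProduct_mulVec, ← mulVec_transpose, hUT2, ← hy]
    simp [dotProduct, mulVec_diagonal, Function.comp]
    exact Finset.sum_congr rfl fun i _ => by ring
  rw [hAx, hxy]
  calc ∑ i, hA.eigenvalues i * (y i)^2 ≤ ∑ i, c * (y i)^2 :=
        Finset.sum_le_sum fun i _ => mul_le_mul_of_nonneg_right (hc i) (sq_nonneg _)
    _ = c * (y ⬝ᵥ y) := by simp [dotProduct, Finset.mul_sum, sq]

lemma cs_abs {L : ℕ} (a b : Fin L → ℝ) :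
    (∑ j, a j * b j)^2 ≤ (∑ j, |a j|) * (∑ j, |a j| * (b j)^2) :=
  Finset.sum_sq_le_sum_mul_sum_of_sq_eq_mul _ (fun _ _ => abs_nonneg _)
    (fun j _ => mul_nonneg (abs_nonneg _) (sq_nonneg _))
    (fun j _ => by rw [mul_pow, ← sq_abs (a j)]; ring)

lemma refl_sum {L : ℕ} (i : Fin L) (g : ℕ → ℝ) :
    ∑ j : Fin L, (if (j:ℕ) ≤ (i:ℕ) then g ((i:ℕ) - (j:ℕ)) else 0)
      = ∑ j : Fin L, (if (j:ℕ) ≤ (i:ℕ) then g (j:ℕ) else 0) := by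
  set e : Fin L → Fin L := fun j =>
    if h : (j:ℕ) ≤ (i:ℕ) then ⟨(i:ℕ) - (j:ℕ), by omega⟩ else j with he
  have hbij : Function.Bijective e := by
    have hinv : Function.Involutive e := by
      intro j
      by_cases h : (j:ℕ) ≤ (i:ℕ)
      · simp only [he, h, dif_pos]
        have h2 : (i:ℕ) - (j:ℕ) ≤ (i:ℕ) := by omega
        simp only [h2, dif_pos]
        exact Fin.ext (by simp; omega)
      · simp only [he, h, dif_neg, not_false_iff]
    exact hinv.bijective
  refine Fintype.sum_bijective e hbij _ _ fun j => ?_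
  by_cases h : (j:ℕ) ≤ (i:ℕ)
  · have : (e j : ℕ) = (i:ℕ) - (j:ℕ) := by simp only [he]; rw [dif_pos h]
    rw [if_pos h, this]
    rw [if_pos (by omega)]
  · have : e j = j := by simp only [he]; rw [dif_neg h]
    rw [if_neg h, this, if_neg h]


/-- Upper bound of Theorem 1: for the SSM output map `y = Hu` with kernel coefficients
`K_j = C̄_j (∏ Ā_i) B̄_j`, if the perturbation satisfies `E[εᵢ²] ≤ M` for all `i`, then
`E[‖y' − y‖²] ≤ c₂ M Σ_j K_j²`, where `c₂` is the largest eigenvalue of `EᵀE`. -/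
theorem ssm_output_error_upper_bound
    {h L : ℕ} {Ω : Type*} [MeasureSpace Ω] [IsProbabilityMeasure (volume : Measure Ω)]
    (A : ℕ → Matrix (Fin h) (Fin h) ℝ) (B : ℕ → (Fin h → ℝ)) (C : ℕ → (Fin h → ℝ))
    (K : Fin L → ℝ)
    (hK : ∀ j : Fin L, K j = C (j : ℕ) ⬝ᵥ (((List.range (j : ℕ)).map A).prod).mulVec (B (j : ℕ)))
    (ε : Ω → Fin L → ℝ) (M : ℝ) (hsq : ∀ i, ∫ ω, (ε ω i) ^ 2 ≤ M)
    (hherm : ((Emat L)ᵀ * Emat L).IsHermitian) (c₂ : ℝ)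
    (hc₂ : IsGreatest (Set.range hherm.eigenvalues) c₂)
    (hint : ∀ i, Integrable (fun ω => ((ε ω i) ^ 2)))
    (hint2 : Integrable (fun ω => ∑ i, ((toeplitzLT K).mulVec (ε ω) i) ^ 2)) :
    ∫ ω, ∑ i, ((toeplitzLT K).mulVec (ε ω) i) ^ 2 ≤ c₂ * M * ∑ j, (K j) ^ 2 := by
  classical
  rcases Nat.eq_zero_or_pos L with hL | hL
  · subst hL
    obtain ⟨i, -⟩ := hc₂.1
    exact i.elim0
  set T := toeplitzLT K with hT
  set s : Fin L → ℝ := fun i => ∑ j, |T i j| with hs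
  have hM0 : 0 ≤ M :=
    le_trans (integral_nonneg fun ω => sq_nonneg (ε ω ⟨0, hL⟩)) (hsq ⟨0, hL⟩)
  have hs0 : ∀ i, 0 ≤ s i := fun i => Finset.sum_nonneg fun j _ => abs_nonneg _
  -- pointwise bound
  have hpt : ∀ ω, ∑ i, (T.mulVec (ε ω) i)^2 ≤ ∑ i, ∑ j, (s i * |T i j|) * (ε ω j)^2 := by
    intro ω
    refine Finset.sum_le_sum fun i _ => ?_
    have h1 : T.mulVec (ε ω) i = ∑ j, T i j * ε ω j := rfl
    rw [h1]
    calc (∑ j, T i j * ε ω j)^2 ≤ (∑ j, |T i j|) * (∑ j, |T i j| * (ε ω j)^2) :=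
          cs_abs (T i) (ε ω)
      _ = ∑ j, (s i * |T i j|) * (ε ω j)^2 := by
          rw [Finset.mul_sum]
          exact Finset.sum_congr rfl fun j _ => by simp only [hs]; ring
  have hintRHS : Integrable (fun ω => ∑ i, ∑ j, (s i * |T i j|) * (ε ω j)^2) :=
    integrable_finset_sum _ fun i _ => integrable_finset_sum _ fun j _ => (hint j).const_mul _
  have hstep1 : ∫ ω, ∑ i, (T.mulVec (ε ω) i)^2
      ≤ ∫ ω, ∑ i, ∑ j, (s i * |T i j|) * (ε ω j)^2 :=
    integral_mono hint2 hintRHS hpt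
  have hstep2 : ∫ ω, ∑ i, ∑ j, (s i * |T i j|) * (ε ω j)^2
      = ∑ i, ∑ j, (s i * |T i j|) * ∫ ω, (ε ω j)^2 := by
    rw [integral_finset_sum _ fun i _ =>
      integrable_finset_sum _ fun j _ => (hint j).const_mul _]
    refine Finset.sum_congr rfl fun i _ => ?_
    rw [integral_finset_sum _ fun j _ => (hint j).const_mul _]
    exact Finset.sum_congr rfl fun j _ => integral_const_mul _ _
  have hstep3 : ∑ i, ∑ j, (s i * |T i j|) * ∫ ω, (ε ω j)^2 ≤ M * ∑ i, (s i)^2 := by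
    calc ∑ i, ∑ j, (s i * |T i j|) * ∫ ω, (ε ω j)^2
        ≤ ∑ i, ∑ j, (s i * |T i j|) * M := by
          refine Finset.sum_le_sum fun i _ => Finset.sum_le_sum fun j _ => ?_
          exact mul_le_mul_of_nonneg_left (hsq j) (mul_nonneg (hs0 i) (abs_nonneg _))
      _ = M * ∑ i, (s i)^2 := by
          rw [Finset.mul_sum]
          refine Finset.sum_congr rfl fun i _ => ?_
          have e1 : ∑ j, (s i * |T i j|) * M = (s i * ∑ j, |T i j|) * M := by
            rw [Finset.mul_sum, Finset.sum_mul]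
          rw [e1]
          show (s i * s i) * M = M * (s i)^2
          ring
  -- identify s with Emat applied to |K|
  set v : Fin L → ℝ := fun j => |K j| with hv
  have hsE : ∀ i, s i = (Emat L).mulVec v i := by
    intro i
    set g : ℕ → ℝ := fun n => if hn : n < L then |K ⟨n, hn⟩| else 0 with hg
    have h1 : s i = ∑ j : Fin L, (if (j:ℕ) ≤ (i:ℕ) then g ((i:ℕ) - (j:ℕ)) else 0) := by
      refine Finset.sum_congr rfl fun j _ => ?_
      by_cases hji : (j:ℕ) ≤ (i:ℕ)
      · rw [if_pos hji]
        have hTij : T i j = K ⟨(i:ℕ) - (j:ℕ), by omega⟩ := by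
          simp only [hT, toeplitzLT, Matrix.of_apply]
          exact dif_pos hji
        rw [hTij, hg]
        have hlt : (i:ℕ) - (j:ℕ) < L := by omega
        simp [hlt]
      · rw [if_neg hji]
        have hTij : T i j = 0 := by
          simp only [hT, toeplitzLT, Matrix.of_apply]
          exact dif_neg hji
        simp [hTij]
    rw [h1, refl_sum i g]
    have h2 : (Emat L).mulVec v i = ∑ j : Fin L, (if (j:ℕ) ≤ (i:ℕ) then g (j:ℕ) else 0) := by
      simp only [mulVec, dotProduct, Emat, Matrix.of_apply]
      refine Finset.sum_congr rfl fun j _ => ?_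
      by_cases hji : j ≤ i
      · rw [if_pos hji, if_pos (Fin.le_iff_val_le_val.mp hji), one_mul, hv, hg]
        simp [j.isLt]
      · rw [if_neg hji, if_neg (fun hn => hji (Fin.le_iff_val_le_val.mpr hn)), zero_mul]
    rw [h2]
  have hray : ∑ i, (s i)^2 ≤ c₂ * ∑ j, (K j)^2 := by
    have h1 : ∑ i, (s i)^2 = ((Emat L).mulVec v) ⬝ᵥ ((Emat L).mulVec v) := by
      simp only [dotProduct, sq]
      exact Finset.sum_congr rfl fun i _ => by rw [hsE i]
    have h2 : v ⬝ᵥ ((Emat L)ᵀ * Emat L).mulVec v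
        = ((Emat L).mulVec v) ⬝ᵥ ((Emat L).mulVec v) := by
      rw [← mulVec_mulVec, dotProduct_mulVec, vecMul_transpose]
    have h3 : v ⬝ᵥ ((Emat L)ᵀ * Emat L).mulVec v ≤ c₂ * (v ⬝ᵥ v) :=
      rayleigh_upper hherm (fun i => hc₂.2 ⟨i, rfl⟩) v
    have h4 : v ⬝ᵥ v = ∑ j, (K j)^2 := by
      simp [dotProduct, hv, ← sq, sq_abs]
    rw [h1, ← h2]; rw [h4] at h3; exact h3
  calc ∫ ω, ∑ i, (T.mulVec (ε ω) i)^2 ≤ M * ∑ i, (s i)^2 := by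
        rw [← hstep2] at hstep3; exact le_trans hstep1 hstep3
    _ ≤ M * (c₂ * ∑ j, (K j)^2) := mul_le_mul_of_nonneg_left hray hM0
    _ = c₂ * M * ∑ j, (K j)^2 := by ring
end
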